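/- Let c = u u* be a finite non-empty binary word consisting of a word u followed by its bitwise complement u*. If x ∈ F(c) contains the factor u, then x = w (u u*)^∞ for some finite word w not containing the factor u. -/
import Mathlib


open Filter MeasureTheory

/-- Left shift by `k` on infinite binary sequences. -/
def shiftSeq (k : ℕ) (x : ℕ → Bool) : ℕ → Bool := fun n => x (n + k)

/-- Strict lexicographic order on infinite binary sequences (`false < true`). -/
def seqLt (a b : ℕ → Bool) : Prop :=
  ∃ n, (∀ k < n, a k = b k) ∧ a n = false ∧ b n = true

def seqLe (a b : ℕ → Bool) : Prop := a = b ∨ seqLt a b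

/-- A finite word viewed as an infinite sequence (padded with zeros). -/
def wordSeq (w : List Bool) : ℕ → Bool := fun n => w.getD n false

/-- Bitwise complement of an infinite sequence. -/
def complSeq (a : ℕ → Bool) : ℕ → Bool := fun n => ! a n

/-- `F(c) = {x : c' ≥ σⁿ(x) ≥ c for all n ≥ 0}` for an infinite bound `c`. -/
def Fset (c : ℕ → Bool) : Set (ℕ → Bool) :=
  {x | ∀ n : ℕ, seqLe c (shiftSeq n x) ∧ seqLe (shiftSeq n x) (complSeq c)}

/-- The real number in `[0,1]` with binary expansion `x`. -/
noncomputable def seqVal (x : ℕ → Bool) : ℝ :=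
  ∑' n : ℕ, (cond (x n) (1 : ℝ) 0) / 2 ^ (n + 1)

/-- The periodic infinite sequence `w^∞`. -/
def perSeq (w : List Bool) : ℕ → Bool := fun n => w.getD (n % w.length) false

/-- `s̃`: the word `s` with its last symbol inverted. -/
def flipLast (s : List Bool) : List Bool :=
  s.dropLast ++ [! s.getD (s.length - 1) false]

/-- `f(s) = s̃ s'` where `s'` is the bitwise complement of `s`. -/
def fW (s : List Bool) : List Bool := flipLast s ++ s.map (fun b => !b)

/-- A finite word `s` is shift-bounded: `s' > σⁿ(s) > s` for `0 < n < |s|`,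
comparisons via the embedding of finite words into infinite sequences
(`s` padded with zeros, `s'` is the complement of the padded sequence);
by convention `[false]` is excluded. -/
def ShiftBounded (s : List Bool) : Prop :=
  s ≠ [false] ∧ ∀ n, 0 < n → n < s.length →
    seqLt (wordSeq s) (wordSeq (s.drop n)) ∧
    seqLt (wordSeq (s.drop n)) (complSeq (wordSeq s))

/-- Prepend a finite word to an infinite sequence. -/
def appendSeq (w : List Bool) (t : ℕ → Bool) : ℕ → Bool :=
  fun n => if n < w.length then w.getD n false else t (n - w.length)

/-- `w^k`: the word `w` repeated `k` times. -/
def repWord (k : ℕ) (w : List Bool) : List Bool :=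
  (List.replicate k w).foldr (· ++ ·) []

/-- The infinite concatenation of the finite words `g 0, g 1, g 2, …`
(assuming all are nonempty, the `n`-th symbol is obtained from the first
`n+1` blocks). -/
def concatSeq (g : ℕ → List Bool) : ℕ → Bool :=
  fun n => (((List.range (n + 1)).map g).foldr (· ++ ·) []).getD n false

lemma seqLe_mono {a b : ℕ → Bool} (h : seqLe a b) (k : ℕ)
    (hag : ∀ j < k, a j = b j) (ha : a k = true) : b k = true := by
  rcases h with rfl | ⟨n, hn, hna, hnb⟩
  · exact ha
  · rcases lt_trichotomy n k with h1 | rfl | h1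
    · rw [← hag n h1, hna] at hnb; simp at hnb
    · rw [hna] at ha; simp at ha
    · rw [← hn k h1]; exact ha

lemma sandwich {a b x : ℕ → Bool} (hax : seqLe a x) (hxb : seqLe x b)
    (L : ℕ) (hab : ∀ j < L, a j = b j) : ∀ k < L, x k = a k := by
  intro k
  induction k using Nat.strong_induction_on with
  | _ k ih =>
    intro hk
    have hax_ag : ∀ j < k, a j = x j := fun j hj => (ih j hj (hj.trans hk)).symm
    have hxb_ag : ∀ j < k, x j = b j := fun j hj =>
      (ih j hj (hj.trans hk)).trans (hab j (hj.trans hk))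
    cases ha : a k with
    | true => exact seqLe_mono hax k hax_ag ha
    | false =>
      cases hx : x k with
      | false => rfl
      | true =>
        have := seqLe_mono hxb k hxb_ag hx
        rw [hab k hk] at ha; rw [ha] at this; simp at this

lemma seqLe_shift {a b : ℕ → Bool} (L : ℕ) (h : seqLe a b)
    (hag : ∀ j < L, a j = b j) :
    seqLe (fun n => a (n + L)) (fun n => b (n + L)) := by
  rcases h with rfl | ⟨n, hn, hna, hnb⟩
  · exact Or.inl rfl
  · have hnL : L ≤ n := by
      by_contra hc; push_neg at hc
      rw [hag n hc, hnb] at hna; simp at hna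
    refine Or.inr ⟨n - L, fun k hk => hn (k + L) (by omega), ?_, ?_⟩
    · simpa [Nat.sub_add_cancel hnL] using hna
    · simpa [Nat.sub_add_cancel hnL] using hnb

lemma map_not_getD (u : List Bool) {j : ℕ} (hj : j < u.length) :
    (u.map (fun b => !b)).getD j false = ! u.getD j false := by
  simp [List.getD_eq_getElem?_getD, List.getElem?_map, List.getElem?_eq_getElem hj]

lemma c_lt (u : List Bool) {j : ℕ} (hj : j < u.length) :
    wordSeq (u ++ u.map (fun b => !b)) j = u.getD j false := by
  simp only [wordSeq]
  exact List.getD_append _ _ _ _ (by omega)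

lemma c_shift (u : List Bool) {j : ℕ} (hj : j < u.length) :
    wordSeq (u ++ u.map (fun b => !b)) (j + u.length) = ! u.getD j false := by
  simp only [wordSeq]
  rw [List.getD_append_right _ _ _ _ (by omega), Nat.add_sub_cancel]
  exact map_not_getD u hj

lemma tail_per (u : List Bool) (hu : u ≠ []) (x : ℕ → Bool)
    (hx : x ∈ Fset (wordSeq (u ++ u.map (fun b => !b)))) (m : ℕ)
    (h0 : ∀ j < u.length, x (m + j) = u.getD j false) :
    ∀ n, x (m + n) = perSeq (u ++ u.map (fun b => !b)) n := by
  have hL : 0 < u.length := List.length_pos_iff.mpr hu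
  have hB : ∀ k, ∀ j < u.length, x (j + (m + k * u.length)) =
      (if k % 2 = 0 then u.getD j false else ! u.getD j false) := by
    intro k
    induction k with
    | zero => intro j hj; simpa [Nat.add_comm] using h0 j hj
    | succ k ihk =>
      have heq : (fun n => shiftSeq (m + k * u.length) x (n + u.length))
          = shiftSeq (m + (k + 1) * u.length) x := by
        funext n; simp only [shiftSeq]; congr 1; ring
      rcases Nat.even_or_odd k with hke | hko
      · have hk2 : k % 2 = 0 := Nat.even_iff.mp hke
        have hk12 : (k + 1) % 2 = 1 := by omega
        have hag : ∀ j < u.length, wordSeq (u ++ u.map (fun b => !b)) j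
            = shiftSeq (m + k * u.length) x j := by
          intro j hj
          rw [c_lt u hj]
          have := ihk j hj; rw [hk2] at this; simp only [if_pos rfl] at this
          simpa [shiftSeq] using this.symm
        have hshift := seqLe_shift u.length (hx (m + k * u.length)).1 hag
        rw [heq] at hshift
        have hup := (hx (m + (k + 1) * u.length)).2
        have hagab : ∀ j < u.length,
            (fun n => wordSeq (u ++ u.map (fun b => !b)) (n + u.length)) j
            = complSeq (wordSeq (u ++ u.map (fun b => !b))) j := by
          intro j hj
          simp only [complSeq]
          rw [c_shift u hj, c_lt u hj]
        have hs := sandwich hshift hup u.length hagab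
        intro j hj
        have := hs j hj
        simp only [shiftSeq] at this
        rw [this, c_shift u hj, hk12]
        simp
      · have hk2 : k % 2 = 1 := Nat.odd_iff.mp hko
        have hk12 : (k + 1) % 2 = 0 := by omega
        have hag : ∀ j < u.length, shiftSeq (m + k * u.length) x j
            = complSeq (wordSeq (u ++ u.map (fun b => !b))) j := by
          intro j hj
          have := ihk j hj; rw [hk2] at this; simp only [if_neg (by omega : ¬(1 = 0))] at this
          simp only [shiftSeq] at this ⊢
          rw [this, complSeq, c_lt u hj]
        have hshift := seqLe_shift u.length (hx (m + k * u.length)).2 hag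
        rw [heq] at hshift
        have hlow := (hx (m + (k + 1) * u.length)).1
        have hagab : ∀ j < u.length, wordSeq (u ++ u.map (fun b => !b)) j
            = (fun n => complSeq (wordSeq (u ++ u.map (fun b => !b))) (n + u.length)) j := by
          intro j hj
          simp only [complSeq]
          rw [c_shift u hj, c_lt u hj]
          simp
        have hs := sandwich hlow hshift u.length hagab
        intro j hj
        have := hs j hj
        simp only [shiftSeq] at this
        rw [this, c_lt u hj, hk12]
        simp
  intro n
  have hjlt : n % u.length < u.length := Nat.mod_lt _ hL
  have hB' := hB (n / u.length) (n % u.length) hjlt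
  have hmc : n / u.length * u.length = u.length * (n / u.length) := Nat.mul_comm _ _
  have hdm := Nat.div_add_mod n u.length
  have hidx : n % u.length + (m + n / u.length * u.length) = m + n := by omega
  rw [hidx] at hB'
  rw [hB']
  simp only [perSeq, List.length_append, List.length_map]
  rcases Nat.even_or_odd (n / u.length) with hke | hko
  · obtain ⟨q, hq⟩ := hke
    have hk2 : n / u.length % 2 = 0 := by omega
    rw [hq] at hdm
    have hr : u.length * (q + q) = q * (u.length + u.length) := by ring
    have hn : n = n % u.length + q * (u.length + u.length) := by omega
    have hmod : n % (u.length + u.length) = n % u.length := by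
      conv_lhs => rw [hn]
      rw [Nat.add_mul_mod_self_right]
      exact Nat.mod_eq_of_lt (by omega)
    rw [hmod, hk2,
      List.getD_append u (u.map (fun b => !b)) false (n % u.length) (by omega)]
    simp
  · obtain ⟨q, hq⟩ := hko
    have hk2 : n / u.length % 2 = 1 := by omega
    rw [hq] at hdm
    have hr : u.length * (2 * q + 1) = u.length + q * (u.length + u.length) := by ring
    have hn : n = (u.length + n % u.length) + q * (u.length + u.length) := by omega
    have hmod : n % (u.length + u.length) = u.length + n % u.length := by
      conv_lhs => rw [hn]
      rw [Nat.add_mul_mod_self_right]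
      exact Nat.mod_eq_of_lt (by omega)
    rw [hmod, hk2,
      List.getD_append_right u (u.map (fun b => !b)) false _ (by omega),
      Nat.add_sub_cancel_left, map_not_getD u hjlt]
    simp

theorem stmt3 (u : List Bool) (hu : u ≠ []) (x : ℕ → Bool)
    (hx : x ∈ Fset (wordSeq (u ++ u.map (fun b => !b))))
    (hocc : ∃ m, ∀ j < u.length, x (m + j) = u.getD j false) :
    ∃ w : List Bool,
      (¬ ∃ m, m + u.length ≤ w.length ∧
          ∀ j < u.length, w.getD (m + j) false = u.getD j false) ∧
      ∀ n, x (w.length + n) = perSeq (u ++ u.map (fun b => !b)) n := by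
  classical
  have hL : 0 < u.length := List.length_pos_iff.mpr hu
  have hPex : ∃ m, ∀ j < u.length, x (m + j) = u.getD j false := hocc
  have hPm := Nat.find_spec hPex
  set m := Nat.find hPex with hm
  refine ⟨List.ofFn (fun i : Fin m => x i), ?_, ?_⟩
  · rintro ⟨m', hle, hmatch⟩
    rw [List.length_ofFn] at hle
    have hPm' : ∀ j < u.length, x (m' + j) = u.getD j false := by
      intro j hj
      have h1 := hmatch j hj
      rw [List.getD_eq_getElem _ _ (by rw [List.length_ofFn]; omega)] at h1
      rw [List.getElem_ofFn] at h1
      simpa using h1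
    exact Nat.find_min hPex (by omega : m' < m) hPm'
  · intro n
    rw [List.length_ofFn]
    exact tail_per u hu x hx m hPm n
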